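/- arXiv:2011.06262 — 7 statements merged into one kernel-verified Lean document; each statement's English description precedes it below -/
import Mathlib

section
/- Let S be a finite semigroup that is aperiodic (i.e., for every s ∈ S there exists n with s^n = s^{n+1}) and satisfies the identity e·a·f·u·e·b·f = e·b·f·u·e·a·f for all idempotents e, f ∈ S and all a, u, b ∈ S. Let S act on the right on a finite set Q. If a point t ∈ Q satisfies t·e = t for some idempotent e ∈ S, and also t = s·x and s = t·y for some s ∈ Q and x, y ∈ S (i.e., t and s are mutually reachable under the action) with s·e = s, then t = s. -/
/-- `spow s n` is the (n+1)-st power of `s` in a semigroup: `spow s 0 = s`. -/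
def spow {S : Type*} [Semigroup S] (s : S) : ℕ → S
  | 0 => s
  | n + 1 => spow s n * s

lemma spow_comm {S : Type*} [Semigroup S] {a b : S} (h : a * b = b * a) :
    ∀ n, spow a n * b = b * spow a n
  | 0 => h
  | n + 1 => by
    show spow a n * a * b = b * (spow a n * a)
    rw [mul_assoc, h, ← mul_assoc, spow_comm h n, mul_assoc]

lemma spow_mul {S : Type*} [Semigroup S] {a b : S} (h : a * b = b * a) :
    ∀ n, spow (a * b) n = spow a n * spow b n
  | 0 => rfl
  | n + 1 => by
    show spow (a*b) n * (a * b) = spow a n * a * (spow b n * b)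
    rw [spow_mul h n, mul_assoc, mul_assoc, ← mul_assoc (spow b n),
      spow_comm h.symm n, mul_assoc]

lemma act_spow {S Q : Type*} [Semigroup S] (act : Q → S → Q)
    (hact : ∀ q s t, act (act q s) t = act q (s * t))
    {t : Q} {c : S} (h : act t c = t) : ∀ n, act t (spow c n) = t
  | 0 => h
  | n + 1 => by
    show act t (spow c n * c) = t
    rw [← hact, act_spow act hact h n, h]

theorem stmt0 {S Q : Type*} [Semigroup S] [Fintype S] [Fintype Q]
    (act : Q → S → Q)
    (hact : ∀ q s t, act (act q s) t = act q (s * t))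
    (haper : ∀ s : S, ∃ n : ℕ, spow s n = spow s (n + 1))
    (hid : ∀ e f a u b : S, e * e = e → f * f = f →
      e * a * f * u * e * b * f = e * b * f * u * e * a * f)
    (t s : Q) (e : S) (he : e * e = e)
    (hte : act t e = t) (hse : act s e = s)
    (x y : S) (hsx : act s x = t) (hty : act t y = s) :
    t = s := by
  set a : S := e * y * e with ha
  set b : S := e * x * e with hb
  -- s = t · a
  have hsa : act t a = s := by
    rw [ha, ← hact, ← hact, hte, hty, hse]
  -- t = s · b
  have htb : act s b = t := by
    rw [hb, ← hact, ← hact, hse, hsx, hte]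
  -- a and b commute
  have hcomm : a * b = b * a := by
    have h1 := hid e e y e x he he
    have h2 : a * e = a := by rw [ha, mul_assoc, he]
    have h3 : b * e = b := by rw [hb, mul_assoc, he]
    calc a * b = a * e * b := by rw [h2]
      _ = b * e * a := by
        rw [ha, hb]; simp only [mul_assoc] at h1 ⊢; exact h1
      _ = b * a := by rw [h3]
  -- t · (a*b) = t
  have htab : act t (a * b) = t := by rw [← hact, hsa, htb]
  obtain ⟨n, hn⟩ := haper a
  have key : spow (a * b) n * a = spow (a * b) n := by
    rw [spow_mul hcomm, mul_assoc, spow_comm hcomm.symm n, ← mul_assoc]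
    show spow a (n + 1) * spow b n = spow a n * spow b n
    rw [← hn]
  have : act t a = t := by
    have := act_spow act hact htab n
    calc act t a = act (act t (spow (a*b) n)) a := by rw [this]
      _ = act t (spow (a*b) n * a) := hact _ _ _
      _ = act t (spow (a*b) n) := by rw [key]
      _ = t := this
  rw [← hsa, this]
end

section
/- Let S be a finite semigroup satisfying eafuebf = ebfueaf for all idempotents e, f and all elements a, u, b, acting on the right on a set Q. Suppose q, t₁, t₂ ∈ Q satisfy: q·e = q and t₁·e = t₁ for some idempotent e ∈ S; q·i = q and t₂·i = t₂ for some idempotent i ∈ S; q·a = q and t₁·a = t₂ for some a ∈ S; and q·b = t₁ for some b ∈ S. Then t₂·e = t₁, and hence t₁ and t₂ are mutually reachable (t₁·a = t₂ and t₂·e = t₁). -/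
theorem stmt1 {S Q : Type*} [Semigroup S] [Fintype S]
    (act : Q → S → Q)
    (hact : ∀ q s t, act (act q s) t = act q (s * t))
    (hid : ∀ e f a u b : S, e * e = e → f * f = f →
      e * a * f * u * e * b * f = e * b * f * u * e * a * f)
    (q t₁ t₂ : Q) (e i a b : S)
    (he : e * e = e) (hi : i * i = i)
    (hqe : act q e = q) (ht1e : act t₁ e = t₁)
    (hqi : act q i = q) (ht2i : act t₂ i = t₂)
    (hqa : act q a = q) (ht1a : act t₁ a = t₂)
    (hqb : act q b = t₁) :
    act t₂ e = t₁ := by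
  have he' : ∀ x : S, e * (e * x) = e * x := fun x => by rw [← mul_assoc, he]
  have comm : e * b * e * (e * a * e) = e * a * e * (e * b * e) := by
    have h := hid e e a e b he he
    simp only [mul_assoc, he'] at h ⊢
    exact h.symm
  have L : act q (e * b * e * (e * a * e)) = act t₂ e := by
    simp only [← hact, hqe, hqb, ht1e, ht1a]
  have R : act q (e * a * e * (e * b * e)) = t₁ := by
    simp only [← hact, hqe, hqa, hqb, ht1e]
  rw [← L, comm, R]
end

section
/- Let S be a finite semigroup satisfying eafuebf = ebfueaf for all idempotents e, f and all elements a, u, b, acting on the right on a set Q. Suppose p, q, r, s, t₁, t₂ ∈ Q satisfy: p·e = p and s·e = s for some idempotent e; q·f = q and r·f = r for some idempotent f; q·f₁ = q and t₁·f₁ = t₁ for some idempotent f₁; q·f₂ = q and t₂·f₂ = t₂ for some idempotent f₂; p·b₁ = q, s·b₁ = t₁, p·b₂ = q, s·b₂ = t₂ for some b₁, b₂ ∈ S; p·a = r and r·u = s for some a, u ∈ S; and q reaches both t₁ and t₂ (there exist c₁, c₂ ∈ S with q·c₁ = t₁ and q·c₂ = t₂). Then t₁ and t₂ are mutually reachable: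 there exist x, y ∈ S with t₁·x = t₂ and t₂·y = t₁. -/
theorem stmt3 {S Q : Type*} [Semigroup S] [Fintype S]
    (act : Q → S → Q)
    (hact : ∀ q s t, act (act q s) t = act q (s * t))
    (hid : ∀ e f a u b : S, e * e = e → f * f = f →
      e * a * f * u * e * b * f = e * b * f * u * e * a * f)
    (p q r s t₁ t₂ : Q) (e f f₁ f₂ a u b₁ b₂ c₁ c₂ : S)
    (he : e * e = e) (hf : f * f = f) (hf1 : f₁ * f₁ = f₁) (hf2 : f₂ * f₂ = f₂)
    (hpe : act p e = p) (hse : act s e = s)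
    (hqf : act q f = q) (hrf : act r f = r)
    (hqf1 : act q f₁ = q) (ht1f1 : act t₁ f₁ = t₁)
    (hqf2 : act q f₂ = q) (ht2f2 : act t₂ f₂ = t₂)
    (hpb1 : act p b₁ = q) (hsb1 : act s b₁ = t₁)
    (hpb2 : act p b₂ = q) (hsb2 : act s b₂ = t₂)
    (hpa : act p a = r) (hru : act r u = s)
    (hqc1 : act q c₁ = t₁) (hqc2 : act q c₂ = t₂) :
    ∃ x y : S, act t₁ x = t₂ ∧ act t₂ y = t₁ := by
  have hff : ∀ x : Q, act (act x f) f = act x f := fun x => by rw [hact, hf]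
  have hf1f1 : ∀ x : Q, act (act x f₁) f₁ = act x f₁ := fun x => by rw [hact, hf1]
  have hf2f2 : ∀ x : Q, act (act x f₂) f₂ = act x f₂ := fun x => by rw [hact, hf2]
  -- t₁·f = t₂·f
  have h1 := congrArg (act p) (hid e f a u b₁ he hf)
  have h2 := congrArg (act p) (hid e f a u b₂ he hf)
  simp only [← hact] at h1 h2
  rw [hpe, hpa, hrf, hru, hse, hsb1, hpb1, hqf] at h1
  rw [hpe, hpa, hrf, hru, hse, hsb2, hpb2, hqf] at h2
  have H1 : act t₁ f = act t₂ f := by rw [h1, h2]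
  -- (t₁·f)·f₁ = t₁
  have h3 := congrArg (act q) (hid f f₁ c₁ f f₁ hf hf1)
  simp only [← hact] at h3
  rw [hqf, hqc1, ht1f1, hff, hf1f1, hqf1, hqf1, hqf, hqf, hqc1, ht1f1] at h3
  -- (t₂·f)·f₂ = t₂
  have h4 := congrArg (act q) (hid f f₂ c₂ f f₂ hf hf2)
  simp only [← hact] at h4
  rw [hqf, hqc2, ht2f2, hff, hf2f2, hqf2, hqf2, hqf, hqf, hqc2, ht2f2] at h4
  refine ⟨f * f₂, f * f₁, ?_, ?_⟩
  · rw [← hact, H1, h4]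
  · rw [← hact, ← H1, h3]
end

section
/- Let S be a finite semigroup satisfying eafuebf = ebfueaf for all idempotents e, f and all elements a, u, b, acting on the right on a finite set Q, and assume additionally that whenever (x,y) ∈ Q×Q is fixed by some idempotent (x·j = x and y·j = y) and x, y are mutually reachable, then x = y. Suppose p, r₁, r₂ ∈ Q satisfy: p·e₁ = p and r₁·e₁ = r₁ for some idempotent e₁; p·e₂ = p and r₂·e₂ = r₂ for some idempotent e₂; and r₁, r₂ are mutually reachable with p reaching r₁. Then r₁·e₂ = r₂. -/
theorem stmt4 {S Q : Type*} [Semigroup S] [Fintype S] [Fintype Q]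
    (act : Q → S → Q)
    (hact : ∀ q s t, act (act q s) t = act q (s * t))
    (hid : ∀ e f a u b : S, e * e = e → f * f = f →
      e * a * f * u * e * b * f = e * b * f * u * e * a * f)
    (hcond1 : ∀ (x y : Q) (j : S), j * j = j → act x j = x → act y j = y →
      (x = y ∨ ∃ s, act x s = y) → (y = x ∨ ∃ s, act y s = x) → x = y)
    (p r₁ r₂ : Q) (e₁ e₂ : S)
    (he1 : e₁ * e₁ = e₁) (he2 : e₂ * e₂ = e₂)
    (hpe1 : act p e₁ = p) (hr1e1 : act r₁ e₁ = r₁)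
    (hpe2 : act p e₂ = p) (hr2e2 : act r₂ e₂ = r₂)
    (h12 : r₁ = r₂ ∨ ∃ s, act r₁ s = r₂)
    (h21 : r₂ = r₁ ∨ ∃ s, act r₂ s = r₁)
    (hpr1 : p = r₁ ∨ ∃ s, act p s = r₁) :
    act r₁ e₂ = r₂ := by
  rcases h12 with h12 | ⟨u, hu⟩
  · subst h12; exact hr2e2
  rcases h21 with h21 | ⟨v, hv⟩
  · subst h21; exact hr2e2
  -- q := act r₁ e₂ is fixed by e₂
  have hq2 : act (act r₁ e₂) e₂ = act r₁ e₂ := by rw [hact, he2]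
  -- key fact: (r₁ · e₂) · e₁ = r₁
  have key : act (act r₁ e₂) e₁ = r₁ := by
    rcases hpr1 with hp | ⟨s, hs⟩
    · have hq : act r₁ e₂ = r₁ := by rw [← hp, hpe2, hp]
      rw [hq, hr1e1]
    · have hword : e₂ * e₂ * e₁ * e₁ * e₂ * s * e₁ = e₂ * s * e₁ * e₁ * e₂ * e₂ * e₁ :=
        hid e₂ e₁ e₂ e₁ s he2 he1
      have h := congrArg (act p) hword
      have L : act p (e₂ * e₂ * e₁ * e₁ * e₂ * s * e₁) = r₁ := by
        simp only [← hact, hpe2, hpe1, hs, hr1e1]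
      have R : act p (e₂ * s * e₁ * e₁ * e₂ * e₂ * e₁) = act (act r₁ e₂) e₁ := by
        simp only [← hact, hpe2, hpe1, hs, hr1e1, hq2]
      rw [L, R] at h
      exact h.symm
  -- q reaches r₂ and r₂ reaches q; both fixed by e₂; apply hcond1
  have hqr : act (act r₁ e₂) (e₁ * u) = r₂ := by rw [← hact, key, hu]
  have hrq : act r₂ (v * e₂) = act r₁ e₂ := by rw [← hact, hv]
  exact hcond1 (act r₁ e₂) r₂ e₂ he2 hq2 hr2e2 (Or.inr ⟨e₁ * u, hqr⟩) (Or.inr ⟨v * e₂, hrq⟩)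
end

section
/- Let S be a finite semigroup acting faithfully on the right on a finite set Q. Suppose that for every x ∈ Q, every idempotent j ∈ S, and every y ∈ Q with x·j = x, y·j = y, if x and y are mutually reachable under the action then x = y. Then S is aperiodic: for every s ∈ S there exists n ≥ 1 with s^n = s^{n+1}. -/
lemma spow_add {S : Type*} [Semigroup S] (s : S) (a b : ℕ) :
    spow s (a + b + 1) = spow s a * spow s b := by
  induction b with
  | zero => rfl
  | succ b ih =>
    show spow s (a + b + 1) * s = _
    rw [ih, mul_assoc]; rfl

lemma spow_period {S : Type*} [Semigroup S] (s : S) {a p : ℕ}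
    (h : spow s a = spow s (a + p)) (k : ℕ) :
    spow s (a + k) = spow s (a + p + k) := by
  induction k with
  | zero => simpa using h
  | succ k ih =>
    show spow s (a + k) * s = spow s (a + p + k) * s
    rw [ih]

lemma spow_period_mul {S : Type*} [Semigroup S] (s : S) {a p : ℕ}
    (h : spow s a = spow s (a + p)) (k j : ℕ) :
    spow s (a + k + j * p) = spow s (a + k) := by
  induction j with
  | zero => simp
  | succ j ih =>
    rw [show a + k + (j + 1) * p = a + p + (k + j * p) by ring,
        ← spow_period s h (k + j * p),
        show a + (k + j * p) = a + k + j * p by ring, ih]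

theorem stmt6 {S Q : Type*} [Semigroup S] [Fintype S] [Fintype Q]
    (act : Q → S → Q)
    (hact : ∀ q s t, act (act q s) t = act q (s * t))
    (hfaithful : ∀ s t : S, (∀ q, act q s = act q t) → s = t)
    (hcond1 : ∀ (x y : Q) (j : S), j * j = j → act x j = x → act y j = y →
      (x = y ∨ ∃ w, act x w = y) → (y = x ∨ ∃ w, act y w = x) → x = y) :
    ∀ s : S, ∃ n : ℕ, spow s n = spow s (n + 1) := by
  intro s
  obtain ⟨a', b', hne, hab'⟩ := Finite.exists_ne_map_eq_of_infinite (spow s)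
  obtain ⟨a, p, hp, hab⟩ : ∃ a p : ℕ, 0 < p ∧ spow s a = spow s (a + p) := by
    rcases Nat.lt_or_ge a' b' with h | h
    · exact ⟨a', b' - a', by omega, by rw [hab']; congr 1; omega⟩
    · have h' : b' < a' := lt_of_le_of_ne h (Ne.symm hne)
      exact ⟨b', a' - b', by omega, by rw [← hab']; congr 1; omega⟩
  -- the idempotent power index
  have hpos : 0 < p * (a + 1) := Nat.mul_pos hp (Nat.succ_pos a)
  have hle : a + 1 ≤ p * (a + 1) := Nat.le_mul_of_pos_left (a + 1) hp
  set m := p * (a + 1) - 1 with hmdef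
  have hm1 : m + 1 = p * (a + 1) := Nat.succ_pred_eq_of_pos hpos
  have hma : a ≤ m := by omega
  obtain ⟨d, hd⟩ : ∃ d, m = a + d := ⟨m - a, by omega⟩
  have key : ∀ t j : ℕ, spow s (m + t + j * (m + 1)) = spow s (m + t) := by
    intro t j
    have e2 : m + t + j * (m + 1) = a + (d + t) + (j * (a + 1)) * p := by
      rw [hm1, hd]; ring
    rw [e2, spow_period_mul s hab (d + t) (j * (a + 1)), hd, Nat.add_assoc]
  have idem : spow s m * spow s m = spow s m := by
    have h := key 0 1
    rw [← spow_add, show m + m + 1 = m + 0 + 1 * (m + 1) by ring, h]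
    norm_num
  have h2 : spow s (m + 1) * spow s m = spow s (m + 1) := by
    have h := key 1 1
    rw [← spow_add, show m + 1 + m + 1 = m + 1 + 1 * (m + 1) by ring, h]
  have h3 : spow s (m + 1) * spow s (m + m) = spow s m := by
    have h := key 0 2
    rw [← spow_add, show m + 1 + (m + m) + 1 = m + 0 + 2 * (m + 1) by ring, h]
    norm_num
  refine ⟨m, hfaithful _ _ fun q => ?_⟩
  refine hcond1 (act q (spow s m)) (act q (spow s (m + 1))) (spow s m) idem ?_ ?_ ?_ ?_
  · rw [hact, idem]
  · rw [hact, h2]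
  · exact Or.inr ⟨s, by rw [hact]; rfl⟩
  · exact Or.inr ⟨spow s (m + m), by rw [hact, h3]⟩
end

section
/- Let S be a finite semigroup satisfying eafuebf = ebfueaf for all idempotents e, f and elements a, u, b, acting on the right on a set Q. Suppose p, q, r, r₁, r₂, q₁ ∈ Q, idempotents e, f ∈ S, and elements a, b, u₁, u₂ ∈ S satisfy: p·e = p; q·f = q and r·f = r; p·a = q and p·b = r; q·u₁ = q₁, r·u₁ = r₁, q·u₂ = q₁, r·u₂ = r₂. Then r₁·(e·a·f) = r₂·(e·a·f). -/
theorem stmt9 {S Q : Type*} [Semigroup S] [Fintype S]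
    (act : Q → S → Q)
    (hact : ∀ q s t, act (act q s) t = act q (s * t))
    (hid : ∀ e f a u b : S, e * e = e → f * f = f →
      e * a * f * u * e * b * f = e * b * f * u * e * a * f)
    (p q r r₁ r₂ q₁ : Q) (e f a b u₁ u₂ : S)
    (he : e * e = e) (hf : f * f = f)
    (hpe : act p e = p)
    (hqf : act q f = q) (hrf : act r f = r)
    (hpa : act p a = q) (hpb : act p b = r)
    (hqu1 : act q u₁ = q₁) (hru1 : act r u₁ = r₁)
    (hqu2 : act q u₂ = q₁) (hru2 : act r u₂ = r₂) :
    act r₁ (e * a * f) = act r₂ (e * a * f) := by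
  have hq : act p (e * a * f) = q := by
    rw [← hact, ← hact, hpe, hpa, hqf]
  have hr : act p (e * b * f) = r := by
    rw [← hact, ← hact, hpe, hpb, hrf]
  have swap1 : e * b * f * (u₁ * (e * a * f)) = e * a * f * (u₁ * (e * b * f)) := by
    have h := hid e f b u₁ a he hf
    simp only [mul_assoc] at h ⊢
    exact h
  have swap2 : e * b * f * (u₂ * (e * a * f)) = e * a * f * (u₂ * (e * b * f)) := by
    have h := hid e f b u₂ a he hf
    simp only [mul_assoc] at h ⊢
    exact h
  have key : act q₁ (e * b * f) = act q₁ (e * b * f) := rfl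
  calc act r₁ (e * a * f)
      = act p (e * b * f * (u₁ * (e * a * f))) := by
        rw [← hru1, ← hr, hact, hact]
    _ = act p (e * a * f * (u₁ * (e * b * f))) := by rw [swap1]
    _ = act q₁ (e * b * f) := by rw [← hqu1, ← hq, hact, hact]
    _ = act p (e * a * f * (u₂ * (e * b * f))) := by rw [← hqu2, ← hq, hact, hact]
    _ = act p (e * b * f * (u₂ * (e * a * f))) := by rw [swap2]
    _ = act r₂ (e * a * f) := by rw [← hru2, ← hr, hact, hact]
end

section
/- Let S be a finite semigroup satisfying eafuebf = ebfueaf for all idempotents e, f and elements a, u, b, acting on the right on a set Q, and assume the action satisfies: for all x, y ∈ Q jointly fixed by a common idempotent, if x and y are mutually reachable then x = y. Suppose p, s, r ∈ Q with p·e = p, s·e = s for an idempotent e, and p ⪰ r ⪰ s, and suppose r₁ ∈ Q satisfies p·e' = p, r₁·e' = r₁ for some idempotent e' and r ⪰ r₁. Then r₁·e and r₁ are mutually reachable: r₁ ⪰ r₁·e and r₁·e ⪰ r₁. -/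
theorem stmt15 {S Q : Type*} [Semigroup S] [Fintype S]
    (act : Q → S → Q)
    (hact : ∀ q s t, act (act q s) t = act q (s * t))
    (hid : ∀ e f a u b : S, e * e = e → f * f = f →
      e * a * f * u * e * b * f = e * b * f * u * e * a * f)
    (hcond1 : ∀ (x y : Q) (j : S), j * j = j → act x j = x → act y j = y →
      (x = y ∨ ∃ w, act x w = y) → (y = x ∨ ∃ w, act y w = x) → x = y)
    (p s r r₁ : Q) (e e' : S)
    (he : e * e = e) (he' : e' * e' = e')
    (hpe : act p e = p) (hse : act s e = s)
    (hpr : p = r ∨ ∃ w, act p w = r) (hrs : r = s ∨ ∃ w, act r w = s)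
    (hpe' : act p e' = p) (hr1e' : act r₁ e' = r₁)
    (hrr1 : r = r₁ ∨ ∃ w, act r w = r₁) :
    (r₁ = act r₁ e ∨ ∃ w, act r₁ w = act r₁ e) ∧
    (act r₁ e = r₁ ∨ ∃ w, act (act r₁ e) w = r₁) := by
  refine ⟨Or.inr ⟨e, rfl⟩, ?_⟩
  have hpr1 : p = r₁ ∨ ∃ w, act p w = r₁ := by
    rcases hpr with rfl | ⟨w1, hw1⟩
    · exact hrr1
    · rcases hrr1 with rfl | ⟨w2, hw2⟩
      · exact Or.inr ⟨w1, hw1⟩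
      · exact Or.inr ⟨w1 * w2, by rw [← hact, hw1, hw2]⟩
  rcases hpr1 with rfl | ⟨w, hw⟩
  · left; rw [hpe]
  · have he2 : ∀ x : S, e' * (e' * x) = e' * x := fun x => by rw [← mul_assoc, he']
    have hkey : e' * w * e' * e * e' = e' * e * (e' * w * e') := by
      have H := hid e' e' w e e' he' he'
      simp only [mul_assoc, he', he2] at H ⊢
      exact H
    have hr1 : act p (e' * w * e') = r₁ := by
      rw [← hact, ← hact, hpe', hw, hr1e']
    right
    refine ⟨e', ?_⟩
    calc act (act r₁ e) e' = act r₁ (e * e') := hact _ _ _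
      _ = act p (e' * w * e' * (e * e')) := by rw [← hr1, hact]
      _ = act p (e' * e * (e' * w * e')) := by rw [← mul_assoc, hkey]
      _ = r₁ := by rw [← hact, ← hact, ← hact p e' e, hpe', hpe, hact, hr1]
end
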